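/- Let T be a phylogenetic tree with labeled vertex set L and let G be its distance graph. Let h be a hidden vertex of T such that some labeled vertex l is a leaf of T, is adjacent to h in T, and satisfies l ∈ Sg(h). Then for every v ∈ Sg(h), δ_max(l) ≤ δ_max(v), where δ_max(u) is the maximum degree of u over all MSTs of G. -/

import Mathlib

open SimpleGraph

/-- The threshold subgraph `G_{≤ t}`: same vertices, only edges of weight `≤ t`. -/
def thresholdGraph {V : Type*} (G : SimpleGraph V) (w : Sym2 V → ℝ) (t : ℝ) :
    SimpleGraph V where
  Adj u v := G.Adj u v ∧ w s(u, v) ≤ t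
  symm := by
    constructor
    intro u v hv
    exact ⟨hv.1.symm, by rw [Sym2.eq_swap]; exact hv.2⟩
  loopless := ⟨fun v hv => G.ne_of_adj hv.1 rfl⟩

/-- The strict threshold subgraph `G_{< t}`. -/
def strictThresholdGraph {V : Type*} (G : SimpleGraph V) (w : Sym2 V → ℝ) (t : ℝ) :
    SimpleGraph V where
  Adj u v := G.Adj u v ∧ w s(u, v) < t
  symm := by
    constructor
    intro u v hv
    exact ⟨hv.1.symm, by rw [Sym2.eq_swap]; exact hv.2⟩
  loopless := ⟨fun v hv => G.ne_of_adj hv.1 rfl⟩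

/-- The laminar family of an edge-weighted graph: the whole vertex set together with the
vertex sets of the connected components of every threshold subgraph. -/
def laminarFamily {V : Type*} (G : SimpleGraph V) (w : Sym2 V → ℝ) : Set (Set V) :=
  insert Set.univ
    {S | ∃ (t : ℝ) (C : (thresholdGraph G w t).ConnectedComponent), S = C.supp}

/-- `M` is a spanning tree of `G`. -/
def IsSpanningTree {V : Type*} (G M : SimpleGraph V) : Prop :=
  M ≤ G ∧ M.IsTree

/-- Total weight of (the edges of) a graph. -/
noncomputable def totalWeight {V : Type*} [Finite V] (M : SimpleGraph V)
    (w : Sym2 V → ℝ) : ℝ :=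
  ∑ e ∈ M.edgeSet.toFinite.toFinset, w e

/-- `M` is a minimum spanning tree of `G` with respect to the weights `w`. -/
def IsMST {V : Type*} [Finite V] (G : SimpleGraph V) (w : Sym2 V → ℝ)
    (M : SimpleGraph V) : Prop :=
  IsSpanningTree G M ∧ ∀ M' : SimpleGraph V, IsSpanningTree G M' →
    totalWeight M w ≤ totalWeight M' w

/-- A phylogenetic tree: a finite tree with strictly positive edge lengths and a nonempty
set `L` of labeled vertices, each hidden vertex having degree at least 3. -/
structure PhyloTree (V : Type*) where
  finV : Finite V
  T : SimpleGraph V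
  isTree : T.IsTree
  len : Sym2 V → ℝ
  len_pos : ∀ e ∈ T.edgeSet, 0 < len e
  L : Set V
  L_nonempty : L.Nonempty
  hidden_deg : ∀ v, v ∉ L → 3 ≤ (T.neighborSet v).ncard

namespace PhyloTree

variable {V : Type*}

/-- The unique path between two vertices of the tree. -/
noncomputable def path (P : PhyloTree V) (u v : V) : P.T.Walk u v :=
  (P.isTree.existsUnique_path u v).exists.choose

lemma path_isPath (P : PhyloTree V) (u v : V) : (P.path u v).IsPath :=
  (P.isTree.existsUnique_path u v).exists.choose_spec

/-- The tree distance: the sum of the edge lengths along the unique path. -/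
noncomputable def dist (P : PhyloTree V) (u v : V) : ℝ :=
  ((P.path u v).edges.map P.len).sum

lemma dist_comm (P : PhyloTree V) (u v : V) : P.dist u v = P.dist v u := by
  have h : (P.path u v).reverse = P.path v u :=
    (P.isTree.existsUnique_path v u).unique ((P.path_isPath u v).reverse)
      (P.path_isPath v u)
  unfold dist
  rw [← h, SimpleGraph.Walk.edges_reverse, List.map_reverse, List.sum_reverse]

/-- The tree distance as a symmetric function on unordered pairs. -/
noncomputable def wdist (P : PhyloTree V) : Sym2 V → ℝ :=
  Sym2.lift ⟨fun u v => P.dist u v, fun u v => P.dist_comm u v⟩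

/-- The surrogate set of a vertex: the labeled vertices closest to it. -/
def Sg (P : PhyloTree V) (h : V) : Set V :=
  {l | l ∈ P.L ∧ ∀ l' ∈ P.L, P.dist l h ≤ P.dist l' h}

/-- `s` is the surrogate vertex `Sg_R(h)` of `h` w.r.t. the ranking `R`:
the element of the surrogate set of `h` of smallest `R`-value. -/
def IsSgR (P : PhyloTree V) (R : V → ℕ) (h : V) (s : V) : Prop :=
  s ∈ P.Sg h ∧ ∀ l ∈ P.Sg h, R s ≤ R l

/-- The edge weights of the distance graph of `P` (the complete graph on `↥P.L`). -/
noncomputable def wG (P : PhyloTree V) : Sym2 ↥P.L → ℝ :=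
  fun e => P.wdist (e.map Subtype.val)

/-- An edge `e` of the distance graph lying in at least one MST (i.e. an edge of `g`). -/
def mstEdge (P : PhyloTree V) (e : Sym2 ↥P.L) : Prop :=
  haveI := P.finV
  ∃ M : SimpleGraph ↥P.L, IsMST (⊤ : SimpleGraph ↥P.L) P.wG M ∧ e ∈ M.edgeSet

/-- `δ_max(v)`: the maximum degree of `v` over all MSTs of the distance graph. -/
noncomputable def deltaMax (P : PhyloTree V) (v : ↥P.L) : ℕ :=
  haveI := P.finV
  sSup {d : ℕ | ∃ M : SimpleGraph ↥P.L,
    IsMST (⊤ : SimpleGraph ↥P.L) P.wG M ∧ d = (M.neighborSet v).ncard}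

end PhyloTree

/-- The smaller of the two ranks of the endpoints of an edge. -/
def sym2MinR {α : Type*} (R : α → ℕ) : Sym2 α → ℕ :=
  Sym2.lift ⟨fun a b => min (R a) (R b), fun a b => min_comm _ _⟩

/-- The larger of the two ranks of the endpoints of an edge. -/
def sym2MaxR {α : Type*} (R : α → ℕ) : Sym2 α → ℕ :=
  Sym2.lift ⟨fun a b => max (R a) (R b), fun a b => max_comm _ _⟩

/-- The strict total order `<_R` on edges: first by weight, then by the smaller rank of
the endpoints, then by the larger rank of the endpoints. -/
def edgeLT {α : Type*} (w : Sym2 α → ℝ) (R : α → ℕ) (e f : Sym2 α) : Prop :=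
  w e < w f ∨ (w e = w f ∧ (sym2MinR R e < sym2MinR R f ∨
    (sym2MinR R e = sym2MinR R f ∧ sym2MaxR R e < sym2MaxR R f)))

/-- `M` is the vertex-ranked MST of `G` w.r.t. the ranking `R`: a spanning tree such that
every non-tree edge `{u,v}` of `G` is the `<_R`-greatest edge of the cycle it closes,
i.e. every edge of the `M`-path from `u` to `v` is `<_R`-smaller than `{u,v}`. -/
def IsVRMST {α : Type*} (G : SimpleGraph α) (w : Sym2 α → ℝ) (R : α → ℕ)
    (M : SimpleGraph α) : Prop :=
  IsSpanningTree G M ∧ ∀ u v : α, G.Adj u v → ¬M.Adj u v →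
    ∀ p : M.Walk u v, p.IsPath → ∀ f ∈ p.edges, edgeLT w R f s(u, v)

section Aux

open SimpleGraph Walk

namespace PhyloTree

variable {V : Type*}

lemma path_eq (P : PhyloTree V) {u v : V} (p : P.T.Walk u v) (hp : p.IsPath) :
    P.path u v = p :=
  (P.isTree.existsUnique_path u v).unique (P.path_isPath u v) hp

lemma dist_le_walk (P : PhyloTree V) {u v : V} (p : P.T.Walk u v) :
    P.dist u v ≤ (p.edges.map P.len).sum := by
  classical
  have hb : P.path u v = p.bypass := P.path_eq p.bypass p.bypass_isPath
  have hnd : p.bypass.edges.Nodup :=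
    SimpleGraph.Walk.edges_nodup_of_support_nodup p.bypass_isPath.support_nodup
  have hsub : List.Subperm p.bypass.edges p.edges := hnd.subperm p.edges_bypass_subset
  obtain ⟨l', hperm, hsl⟩ := hsub
  have h1 : (p.bypass.edges.map P.len).sum = (l'.map P.len).sum :=
    ((hperm.map P.len).sum_eq).symm
  have h2 : (l'.map P.len).sum ≤ (p.edges.map P.len).sum := by
    refine (hsl.map P.len).sum_le_sum ?_
    intro a ha
    obtain ⟨e, he, rfl⟩ := List.mem_map.mp ha
    exact (P.len_pos e (p.edges_subset_edgeSet he)).le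
  show ((P.path u v).edges.map P.len).sum ≤ _
  rw [hb]
  exact h1.trans_le h2

lemma dist_triangle (P : PhyloTree V) (a b c : V) :
    P.dist a c ≤ P.dist a b + P.dist b c := by
  have := P.dist_le_walk ((P.path a b).append (P.path b c))
  rwa [SimpleGraph.Walk.edges_append, List.map_append, List.sum_append] at this

lemma dist_adj (P : PhyloTree V) {a b : V} (h : P.T.Adj a b) :
    P.dist a b = P.len s(a, b) := by
  have hpa : (SimpleGraph.Walk.cons h SimpleGraph.Walk.nil).IsPath := by
    simp [SimpleGraph.Walk.cons_isPath_iff, h.ne]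
  have : P.path a b = SimpleGraph.Walk.cons h SimpleGraph.Walk.nil := P.path_eq _ hpa
  show ((P.path a b).edges.map P.len).sum = _
  rw [this]
  simp

lemma dist_leaf (P : PhyloTree V) {l h : V} (hleaf : (P.T.neighborSet l).ncard = 1)
    (hadj : P.T.Adj h l) {u : V} (hul : u ≠ l) :
    P.dist l u = P.len s(l, h) + P.dist h u := by
  have hN : P.T.neighborSet l = {h} := by
    obtain ⟨a, ha⟩ := Set.ncard_eq_one.mp hleaf
    have hm : h ∈ P.T.neighborSet l := hadj.symm
    rw [ha] at hm ⊢
    rw [Set.mem_singleton_iff.mp hm]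
  have key : ∀ (p : P.T.Walk l u), p.IsPath →
      (p.edges.map P.len).sum = P.len s(l, h) + P.dist h u := by
    intro p hp
    cases p with
    | nil => exact absurd rfl hul
    | cons h' q =>
      rename_i x
      have hx : h = x := by
        have : x ∈ P.T.neighborSet l := h'
        rw [hN] at this
        exact this.symm
      subst hx
      have hq : P.path h u = q :=
        P.path_eq q ((SimpleGraph.Walk.cons_isPath_iff _ _).mp hp).1
      show (P.len s(l, h) :: q.edges.map P.len).sum = _
      rw [List.sum_cons]
      congr 1
      show _ = ((P.path h u).edges.map P.len).sum
      rw [hq]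
  exact key (P.path l u) (P.path_isPath l u)

lemma key_ineq (P : PhyloTree V) {h l v : V} (hl : l ∈ P.Sg h) (hv : v ∈ P.Sg h)
    (hleaf : (P.T.neighborSet l).ncard = 1) (hadj : P.T.Adj h l)
    {u : V} (hu : u ≠ l) : P.dist v u ≤ P.dist l u := by
  have h1 : P.dist v h = P.dist l h :=
    le_antisymm (hv.2 l hl.1) (hl.2 v hv.1)
  calc P.dist v u ≤ P.dist v h + P.dist h u := P.dist_triangle v h u
    _ = P.dist l h + P.dist h u := by rw [h1]
    _ = P.len s(l, h) + P.dist h u := by rw [P.dist_adj hadj.symm]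
    _ = P.dist l u := (P.dist_leaf hleaf hadj hu).symm

end PhyloTree

end Aux

section Exchange

open SimpleGraph

variable {α : Type*} [Finite α] {w : Sym2 α → ℝ} {l v : α}

lemma exchange_step (hlv : l ≠ v)
    (hw : ∀ u : α, u ≠ l → u ≠ v → w s(v, u) ≤ w s(l, u))
    (M : SimpleGraph α) (hM : IsMST ⊤ w M) (h2 : 2 ≤ (M.neighborSet l).ncard) :
    ∃ M', IsMST ⊤ w M' ∧ (M'.neighborSet l).ncard = (M.neighborSet l).ncard - 1
        ∧ (M'.neighborSet v).ncard = (M.neighborSet v).ncard + 1 := by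
  classical
  obtain ⟨⟨hle, htree⟩, hmin⟩ := hM
  obtain ⟨p, hp, hpu⟩ := htree.existsUnique_path l v
  cases p with
  | nil => exact absurd rfl hlv
  | cons h0 q =>
    rename_i u0
    -- pick a neighbor u of l distinct from u0
    have hexu : ∃ u ∈ M.neighborSet l, u ≠ u0 := by
      by_contra hcon
      push_neg at hcon
      have hsub : M.neighborSet l ⊆ {u0} := fun x hx => hcon x hx
      have := Set.ncard_le_ncard hsub (Set.finite_singleton u0)
      rw [Set.ncard_singleton] at this
      omega
    obtain ⟨u, hu, huu0⟩ := hexu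
    have hadj_lu : M.Adj l u := hu
    have hul : u ≠ l := hadj_lu.ne'
    have huv : u ≠ v := by
      rintro rfl
      have hpath2 : (SimpleGraph.Walk.cons hadj_lu SimpleGraph.Walk.nil).IsPath := by
        simp [SimpleGraph.Walk.cons_isPath_iff, hadj_lu.ne]
      have hsupp := congrArg SimpleGraph.Walk.support (hpu _ hpath2)
      rw [SimpleGraph.Walk.support_cons, SimpleGraph.Walk.support_cons,
        SimpleGraph.Walk.support_nil, q.support_eq_cons] at hsupp
      simp only [List.cons.injEq, true_and] at hsupp
      exact huu0 hsupp.1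
    have hnadj : ¬ M.Adj v u := by
      intro ha
      have hpath3 : (SimpleGraph.Walk.cons hadj_lu
          (SimpleGraph.Walk.cons ha.symm SimpleGraph.Walk.nil)).IsPath := by
        simp [SimpleGraph.Walk.cons_isPath_iff, hadj_lu.ne, hlv, huv, Ne.symm huv]
      have hsupp := congrArg SimpleGraph.Walk.support (hpu _ hpath3)
      rw [SimpleGraph.Walk.support_cons, SimpleGraph.Walk.support_cons,
        SimpleGraph.Walk.support_cons, SimpleGraph.Walk.support_nil,
        q.support_eq_cons] at hsupp
      simp only [List.cons.injEq, true_and] at hsupp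
      exact huu0 hsupp.1
    set e : Sym2 α := s(l, u) with he_def
    set f : Sym2 α := s(v, u) with hf_def
    have hef : e ≠ f := by
      rw [he_def, hf_def]
      intro hh
      rcases Sym2.eq_iff.mp hh with ⟨h1, _⟩ | ⟨_, h2⟩
      · exact hlv h1
      · exact huv h2
    have he_mem : e ∈ M.edgeSet := hadj_lu
    have hf_not : f ∉ M.edgeSet := hnadj
    -- e is not an edge of the path from l to v
    have he_path : e ∉ (SimpleGraph.Walk.cons h0 q).edges := by
      intro hmem
      rw [SimpleGraph.Walk.edges_cons] at hmem
      rcases List.mem_cons.mp hmem with h1 | h1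
      · rcases Sym2.eq_iff.mp h1 with ⟨_, h3⟩ | ⟨_, h4⟩
        · exact huu0 h3
        · exact hul h4
      · have : l ∈ q.support := q.fst_mem_support_of_mem_edges h1
        exact ((SimpleGraph.Walk.cons_isPath_iff _ _).mp hp).2 this
    -- every M-walk from v to u uses the edge e
    have hreach_vu : ∀ (W : M.Walk v u), e ∈ W.edges := by
      intro W
      by_contra hW
      set B : M.Walk l u := (SimpleGraph.Walk.cons h0 q).append W with hB_def
      obtain ⟨pp, hpp, hppu⟩ := htree.existsUnique_path l u
      have hone : (SimpleGraph.Walk.cons hadj_lu SimpleGraph.Walk.nil).IsPath := by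
        simp [SimpleGraph.Walk.cons_isPath_iff, hadj_lu.ne]
      have hbp : B.bypass = SimpleGraph.Walk.cons hadj_lu SimpleGraph.Walk.nil := by
        rw [hppu _ B.bypass_isPath, hppu _ hone]
      have hmem : e ∈ B.bypass.edges := by
        rw [hbp, SimpleGraph.Walk.edges_cons]
        exact List.mem_cons_self
      have := B.edges_bypass_subset hmem
      rw [hB_def, SimpleGraph.Walk.edges_append, List.mem_append] at this
      rcases this with h1 | h1
      · exact he_path h1
      · exact hW h1
    -- the new graph
    set M' : SimpleGraph α := SimpleGraph.fromEdgeSet ((M.edgeSet \ {e}) ∪ {f})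
      with hM'def
    have hM'adj : ∀ a b, M'.Adj a b ↔ ((M.Adj a b ∧ s(a, b) ≠ e) ∨ s(a, b) = f) := by
      intro a b
      rw [hM'def, SimpleGraph.fromEdgeSet_adj]
      constructor
      · rintro ⟨hmem, _⟩
        rcases hmem with ⟨h1, h2⟩ | h1
        · exact Or.inl ⟨h1, h2⟩
        · exact Or.inr h1
      · rintro (⟨h1, h2⟩ | h1)
        · exact ⟨Or.inl ⟨h1, h2⟩, h1.ne⟩
        · refine ⟨Or.inr h1, ?_⟩
          rintro rfl
          rw [hf_def] at h1
          rcases Sym2.eq_iff.mp h1 with ⟨h3, h4⟩ | ⟨h3, h4⟩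
          · exact huv (h4.symm.trans h3)
          · exact huv (h3.symm.trans h4)
    have hM'edge : M'.edgeSet = (M.edgeSet \ {e}) ∪ {f} := by
      rw [hM'def, SimpleGraph.edgeSet_fromEdgeSet]
      ext x
      constructor
      · exact fun hx => hx.1
      · intro hx
        refine ⟨hx, ?_⟩
        rcases hx with ⟨h1, _⟩ | h1
        · exact SimpleGraph.not_isDiag_of_mem_edgeSet M h1
        · rw [Set.mem_singleton_iff.mp h1, hf_def]
          exact fun hd => huv (Sym2.mk_isDiag_iff.mp hd).symm
    have hM'vu : M'.Adj v u := (hM'adj v u).mpr (Or.inr rfl)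
    -- connectivity
    have hlv_reach : M'.Reachable l v := by
      have hsub : ∀ x ∈ (SimpleGraph.Walk.cons h0 q).edges, x ∈ M'.edgeSet := by
        intro x hx
        rw [hM'edge]
        left
        refine ⟨(SimpleGraph.Walk.edges_subset_edgeSet _) hx, ?_⟩
        intro hxe
        rw [Set.mem_singleton_iff.mp hxe] at hx
        exact he_path hx
      exact ⟨(SimpleGraph.Walk.cons h0 q).transfer M' hsub⟩
    have hM'lu : M'.Reachable l u := hlv_reach.trans ⟨hM'vu.toWalk⟩
    have hM'conn : M'.Connected := by
      have hpre : M'.Preconnected := by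
        have step : ∀ a b : α, (W : M.Walk a b) → M'.Reachable a b := by
          intro a b W
          induction W with
          | nil => exact SimpleGraph.Reachable.refl _
          | @cons a' c' b' hadj W ih =>
            refine SimpleGraph.Reachable.trans ?_ ih
            by_cases hce : s(a', c') = e
            · rw [he_def] at hce
              rcases Sym2.eq_iff.mp hce with ⟨h3, h4⟩ | ⟨h3, h4⟩
              · subst h3; subst h4; exact hM'lu
              · subst h3; subst h4; exact hM'lu.symm
            · exact ⟨((hM'adj _ _).mpr (Or.inl ⟨hadj, hce⟩)).toWalk⟩
        intro a b
        obtain ⟨W⟩ := htree.isConnected.preconnected a b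
        exact step a b W
      haveI : Nonempty α := ⟨l⟩
      exact ⟨hpre⟩
    -- acyclicity
    have hbridge : M'.IsBridge f := by
      rw [hf_def, SimpleGraph.isBridge_iff]
      rw [SimpleGraph.reachable_delete_edges_iff_exists_walk]
      rintro ⟨W, hW⟩
      rw [← hf_def] at hW
      have hsubM : ∀ x ∈ W.edges, x ∈ M.edgeSet := by
        intro x hx
        have := W.edges_subset_edgeSet hx
        rw [hM'edge] at this
        rcases this with ⟨h1, _⟩ | h1
        · exact h1
        · exact absurd (Set.mem_singleton_iff.mp h1 ▸ hx) hW
      have hWe : e ∉ W.edges := by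
        intro hx
        have := W.edges_subset_edgeSet hx
        rw [hM'edge] at this
        rcases this with ⟨_, h1⟩ | h1
        · exact h1 rfl
        · exact hef (Set.mem_singleton_iff.mp h1)
      have := hreach_vu (W.transfer M hsubM)
      rw [SimpleGraph.Walk.edges_transfer] at this
      exact hWe this
    have hacyc : M'.IsAcyclic := by
      intro a c hc
      by_cases hf_in : f ∈ c.edges
      · have hb2 := (SimpleGraph.isBridge_iff_adj_and_forall_cycle_notMem (G := M') (e := s(v, u)) hM'vu).mp
          (hf_def ▸ hbridge) c hc
        rw [← hf_def] at hb2
        exact hb2 hf_in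
      · have hsubM : ∀ x ∈ c.edges, x ∈ M.edgeSet := by
          intro x hx
          have := c.edges_subset_edgeSet hx
          rw [hM'edge] at this
          rcases this with ⟨h1, _⟩ | h1
          · exact h1
          · exact absurd (Set.mem_singleton_iff.mp h1 ▸ hx) hf_in
        exact htree.IsAcyclic _ (hc.transfer hsubM)
    -- weight comparison
    have hwf_le : w f ≤ w e := hw u hul huv
    have hwt : totalWeight M' w ≤ totalWeight M w := by
      unfold totalWeight
      have hfin : M'.edgeSet.toFinite.toFinset
          = insert f ((M.edgeSet.toFinite.toFinset).erase e) := by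
        ext x
        simp only [Set.Finite.mem_toFinset, hM'edge, Set.mem_union, Set.mem_diff,
          Set.mem_singleton_iff, Finset.mem_insert, Finset.mem_erase,
          Set.Finite.mem_toFinset]
        tauto
      rw [hfin]
      have hfe : f ∉ (M.edgeSet.toFinite.toFinset).erase e := by
        simp [Set.Finite.mem_toFinset, hf_not]
      rw [Finset.sum_insert hfe]
      have heA : e ∈ M.edgeSet.toFinite.toFinset := by
        simp [Set.Finite.mem_toFinset, he_mem]
      rw [Finset.sum_erase_eq_sub heA]
      linarith
    have hM'mst : IsMST ⊤ w M' :=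
      ⟨⟨le_top, ⟨hM'conn, hacyc⟩⟩, fun M'' hM'' => hwt.trans (hmin M'' hM'')⟩
    -- degree computations
    have hNl : M'.neighborSet l = M.neighborSet l \ {u} := by
      ext x
      simp only [SimpleGraph.mem_neighborSet, Set.mem_diff, Set.mem_singleton_iff]
      rw [hM'adj]
      constructor
      · rintro (⟨h1, h2⟩ | h1)
        · refine ⟨h1, ?_⟩
          rintro rfl
          exact h2 rfl
        · rw [hf_def] at h1
          rcases Sym2.eq_iff.mp h1 with ⟨h3, _⟩ | ⟨h3, _⟩
          · exact absurd h3 hlv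
          · exact absurd h3.symm hul
      · rintro ⟨h1, h2⟩
        left
        refine ⟨h1, ?_⟩
        rw [he_def]
        intro hh
        rcases Sym2.eq_iff.mp hh with ⟨_, h4⟩ | ⟨h4, _⟩
        · exact h2 h4
        · exact hul h4.symm
    have hNv : M'.neighborSet v = insert u (M.neighborSet v) := by
      ext x
      simp only [SimpleGraph.mem_neighborSet, Set.mem_insert_iff]
      rw [hM'adj]
      constructor
      · rintro (⟨h1, _⟩ | h1)
        · exact Or.inr h1
        · rw [hf_def] at h1
          rcases Sym2.eq_iff.mp h1 with ⟨_, h4⟩ | ⟨h3, _⟩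
          · exact Or.inl h4
          · exact absurd h3.symm huv
      · rintro (rfl | h1)
        · exact Or.inr rfl
        · left
          refine ⟨h1, ?_⟩
          rw [he_def]
          intro hh
          rcases Sym2.eq_iff.mp hh with ⟨h3, _⟩ | ⟨h3, _⟩
          · exact hlv h3.symm
          · exact huv h3.symm
    refine ⟨M', hM'mst, ?_, ?_⟩
    · rw [hNl, Set.ncard_diff_singleton_of_mem hu]
    · rw [hNv]
      exact Set.ncard_insert_of_notMem (fun hmem => hnadj hmem) (Set.toFinite _)

lemma exchange (hlv : l ≠ v)
    (hw : ∀ u : α, u ≠ l → u ≠ v → w s(v, u) ≤ w s(l, u)) :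
    ∀ n (M : SimpleGraph α), IsMST ⊤ w M → (M.neighborSet l).ncard = n →
    ∃ M', IsMST ⊤ w M' ∧
      (M.neighborSet l).ncard + (M.neighborSet v).ncard
        ≤ (M'.neighborSet l).ncard + (M'.neighborSet v).ncard ∧
      (M'.neighborSet l).ncard ≤ 1 := by
  intro n
  induction n using Nat.strong_induction_on with
  | _ n ih =>
    intro M hM hdeg
    by_cases h1 : (M.neighborSet l).ncard ≤ 1
    · exact ⟨M, hM, le_rfl, h1⟩
    · push_neg at h1
      obtain ⟨M', hM', hl', hv'⟩ := exchange_step hlv hw M hM h1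
      obtain ⟨M'', hM'', hsum, hle⟩ := ih (n - 1) (by omega) M' hM' (by omega)
      exact ⟨M'', hM'', by omega, hle⟩

end Exchange

/-- a leaf `l` adjacent to a hidden vertex `h` and lying in `Sg(h)`
minimizes `δ_max` over the surrogate set `Sg(h)`. -/
theorem leaf_minimizes_deltaMax {V : Type*} (P : PhyloTree V) (h : V) (hh : h ∉ P.L)
    (l : V) (hleaf : (P.T.neighborSet l).ncard = 1) (hadj : P.T.Adj h l)
    (hl : l ∈ P.Sg h) :
    ∀ v, ∀ hv : v ∈ P.Sg h, P.deltaMax ⟨l, hl.1⟩ ≤ P.deltaMax ⟨v, hv.1⟩ := by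
  haveI := P.finV
  intro v hv
  rcases eq_or_ne l v with rfl | hne
  · exact le_rfl
  set lS : ↥P.L := ⟨l, hl.1⟩ with hlS
  set vS : ↥P.L := ⟨v, hv.1⟩ with hvS
  have hlvS : lS ≠ vS := fun hcon => hne (congrArg Subtype.val hcon)
  have hwkey : ∀ u : ↥P.L, u ≠ lS → u ≠ vS → P.wG s(vS, u) ≤ P.wG s(lS, u) := by
    intro u hu _
    have hu' : (u : V) ≠ l := fun hcon => hu (Subtype.ext hcon)
    have : P.dist v u ≤ P.dist l u := P.key_ineq hl hv hleaf hadj hu'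
    simpa [PhyloTree.wG, PhyloTree.wdist, Sym2.map_pair_eq] using this
  unfold PhyloTree.deltaMax
  set Sl : Set ℕ := {d : ℕ | ∃ M : SimpleGraph ↥P.L,
    IsMST (⊤ : SimpleGraph ↥P.L) P.wG M ∧ d = (M.neighborSet lS).ncard} with hSl
  set Sv : Set ℕ := {d : ℕ | ∃ M : SimpleGraph ↥P.L,
    IsMST (⊤ : SimpleGraph ↥P.L) P.wG M ∧ d = (M.neighborSet vS).ncard} with hSv
  have hbdd : BddAbove Sv := by
    refine ⟨Nat.card ↥P.L, ?_⟩
    rintro d ⟨M, _, rfl⟩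
    rw [← Set.ncard_univ]
    exact Set.ncard_le_ncard (Set.subset_univ _) Set.finite_univ
  rcases Set.eq_empty_or_nonempty Sl with hS | hS
  · rw [hS, csSup_empty]
    exact Nat.zero_le _
  · apply csSup_le hS
    rintro d ⟨M, hM, rfl⟩
    have hvdeg : 1 ≤ (M.neighborSet vS).ncard := by
      obtain ⟨W⟩ := hM.1.2.isConnected.preconnected vS lS
      have hnn : ¬ W.Nil := SimpleGraph.Walk.not_nil_of_ne hlvS.symm
      have ha : M.Adj vS (W.getVert 1) := W.adj_snd hnn
      exact (Set.ncard_pos (Set.toFinite _)).mpr ⟨_, ha⟩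
    obtain ⟨M', hM', hsum, hle1⟩ := exchange hlvS hwkey _ M hM rfl
    have hdv : (M.neighborSet lS).ncard ≤ (M'.neighborSet vS).ncard := by omega
    exact hdv.trans (le_csSup hbdd ⟨M', hM', rfl⟩)
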